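/- Let m, p ∈ ℕ with m+1 < p ≤ 2m, and let A = [0,m] ∪ {p}. Then |A+A| = m+p+2 and |A-A| = 2p+1; in particular A is MDTS with |A-A| - |A+A| = p - m - 1. -/

import Mathlib

open Finset Pointwise

theorem stmt_6 (m p : ℤ) (hm : 0 ≤ m) (hp1 : m + 1 < p) (hp2 : p ≤ 2 * m)
    (A : Finset ℤ) (hA : A = Finset.Icc 0 m ∪ {p}) :
    ((A + A).card : ℤ) = m + p + 2 ∧ ((A - A).card : ℤ) = 2 * p + 1 ∧
    (A + A).card < (A - A).card ∧ ((A - A).card : ℤ) - ((A + A).card : ℤ) = p - m - 1 := by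
  have hAmem : ∀ a : ℤ, a ∈ A ↔ (0 ≤ a ∧ a ≤ m) ∨ a = p := by
    intro a; simp [hA]; exact or_comm
  have hsum : A + A = Finset.Icc 0 (p + m) ∪ {2 * p} := by
    ext x
    simp only [Finset.mem_add, Finset.mem_union, Finset.mem_Icc, Finset.mem_singleton, hAmem]
    constructor
    · rintro ⟨a, ha, b, hb, rfl⟩; omega
    · rintro (⟨h0, h1⟩ | rfl)
      · by_cases hx : x ≤ m
        · exact ⟨0, Or.inl ⟨le_refl 0, hm⟩, x, Or.inl ⟨h0, hx⟩, by ring⟩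
        · by_cases hx2 : x ≤ 2 * m
          · exact ⟨m, Or.inl ⟨hm, le_refl m⟩, x - m, Or.inl ⟨by omega, by omega⟩, by ring⟩
          · exact ⟨p, Or.inr rfl, x - p, Or.inl ⟨by omega, by omega⟩, by ring⟩
      · exact ⟨p, Or.inr rfl, p, Or.inr rfl, by ring⟩
  have hdiff : A - A = Finset.Icc (-p) p := by
    ext x
    simp only [Finset.mem_sub, Finset.mem_Icc, hAmem]
    constructor
    · rintro ⟨a, ha, b, hb, rfl⟩; omega
    · rintro ⟨h0, h1⟩
      by_cases hx : x > m
      · exact ⟨p, Or.inr rfl, p - x, Or.inl ⟨by omega, by omega⟩, by ring⟩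
      · by_cases hx2 : x < -m
        · exact ⟨p + x, Or.inl ⟨by omega, by omega⟩, p, Or.inr rfl, by ring⟩
        · by_cases hx3 : 0 ≤ x
          · exact ⟨x, Or.inl ⟨hx3, by omega⟩, 0, Or.inl ⟨le_refl 0, hm⟩, by ring⟩
          · exact ⟨0, Or.inl ⟨le_refl 0, hm⟩, -x, Or.inl ⟨by omega, by omega⟩, by ring⟩
  have hd : Disjoint (Finset.Icc 0 (p + m)) ({2 * p} : Finset ℤ) := by
    simp only [Finset.disjoint_singleton_right, Finset.mem_Icc]
    omega
  have c1 : ((A + A).card : ℤ) = m + p + 2 := by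
    rw [hsum, Finset.card_union_of_disjoint hd, Finset.card_singleton, Int.card_Icc]
    push_cast
    omega
  have c2 : ((A - A).card : ℤ) = 2 * p + 1 := by
    rw [hdiff, Int.card_Icc]
    omega
  refine ⟨c1, c2, ?_, by omega⟩
  omega
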